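/- For all integers n and all positive integers k, the value A_k(n) is a real number, i.e. the imaginary part of A_k(n) is zero. -/

import Mathlib

open Complex

/-- The Dedekind sum `s(h, k)`. -/
noncomputable def dedekindSum (h k : ℕ) : ℝ :=
  ∑ i ∈ Finset.Ico 1 k,
    (i : ℝ) / k * ((h * i : ℝ) / k - ⌊(h * i : ℝ) / k⌋ - 1 / 2)

/-- The exponential sum `A_k(n)` from the Hardy-Ramanujan-Rademacher formula. -/
noncomputable def radeA (k : ℕ) (n : ℤ) : ℂ :=
  ∑ h ∈ Finset.range k,
    if Nat.gcd h k = 1 then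
      Complex.exp (Real.pi * Complex.I * (dedekindSum h k - 2 * h * n / k))
    else 0

lemma dedekindSum_sub (k h : ℕ) (hk : 0 < k) (hh : h ≤ k) (hcop : Nat.gcd h k = 1) :
    dedekindSum (k - h) k = - dedekindSum h k := by
  unfold dedekindSum
  rw [← Finset.sum_neg_distrib]
  refine Finset.sum_congr rfl fun i hi => ?_
  rw [Finset.mem_Ico] at hi
  have hk0 : (k : ℝ) ≠ 0 := Nat.cast_ne_zero.mpr hk.ne'
  have hx : (((k - h : ℕ) : ℝ) * i) / k = (i : ℝ) - (h * i : ℝ) / k := by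
    rw [Nat.cast_sub hh]
    field_simp
  have hfr : Int.fract ((h * i : ℝ) / k) ≠ 0 := by
    intro h0
    have h1 : ((h * i : ℝ) / k) = (⌊(h * i : ℝ) / k⌋ : ℝ) := by
      have := Int.self_sub_floor ((h * i : ℝ) / k)
      rw [h0] at this; linarith
    have hR : ((h * i : ℕ) : ℝ) = ((k : ℤ) * ⌊(h * i : ℝ) / k⌋ : ℤ) := by
      push_cast
      rw [mul_comm (k : ℝ), ← h1]
      field_simp
    have hZ : ((h * i : ℕ) : ℤ) = (k : ℤ) * ⌊(h * i : ℝ) / k⌋ := by exact_mod_cast hR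
    have hdvd : (k : ℤ) ∣ ((h * i : ℕ) : ℤ) := ⟨_, hZ⟩
    have hdvd' : k ∣ h * i := Int.natCast_dvd_natCast.mp (by exact_mod_cast hdvd)
    have : k ∣ i := Nat.Coprime.dvd_of_dvd_mul_left (Nat.coprime_comm.mp hcop) hdvd'
    exact absurd (Nat.le_of_dvd (Nat.lt_of_lt_of_le Nat.zero_lt_one hi.1) this)
      (not_le.mpr hi.2)
  have key : ∀ x : ℝ, x - ⌊x⌋ - 1/2 = Int.fract x - 1/2 := fun x => by
    rw [Int.self_sub_floor]
  rw [hx, key, key]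
  have : Int.fract ((i : ℝ) - (h * i : ℝ) / k) = 1 - Int.fract ((h * i : ℝ) / k) := by
    rw [sub_eq_add_neg, Int.fract_natCast_add, Int.fract_neg hfr]
  rw [this]
  ring

lemma dedekindSum_one_two : dedekindSum 1 2 = 0 := by
  unfold dedekindSum
  rw [show Finset.Ico 1 2 = {1} from rfl]
  norm_num

theorem radeA_real (k : ℕ) (hk : 0 < k) (n : ℤ) : (radeA k n).im = 0 := by
  have hk0 : (k : ℝ) ≠ 0 := Nat.cast_ne_zero.mpr hk.ne'
  unfold radeA
  rw [Complex.im_sum]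
  have hterm : ∀ h : ℕ, ((if Nat.gcd h k = 1 then
      Complex.exp (Real.pi * Complex.I * ((dedekindSum h k : ℂ) - 2 * h * n / k)) else 0) : ℂ).im
      = (if Nat.gcd h k = 1 then
          Real.sin (Real.pi * (dedekindSum h k - 2 * h * n / k)) else 0) := by
    intro h
    split
    · rw [show ((Real.pi : ℂ) * Complex.I * ((dedekindSum h k : ℂ) - 2 * h * n / k) : ℂ)
          = ((Real.pi * (dedekindSum h k - 2 * h * n / k) : ℝ) : ℂ) * Complex.I by
        push_cast; ring]
      exact Complex.exp_ofReal_mul_I_im _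
    · simp
  rw [Finset.sum_congr rfl fun h _ => hterm h]
  set f : ℕ → ℝ := fun h => if Nat.gcd h k = 1 then
      Real.sin (Real.pi * (dedekindSum h k - 2 * h * n / k)) else 0 with hf
  have hcases : ∀ a : ℕ, a < k → (k - a) % k = a → a = 0 ∨ k = 2 * a := by
    intro a ha hfix
    rcases Nat.eq_zero_or_pos a with rfl | hpos
    · exact Or.inl rfl
    · right
      rw [Nat.mod_eq_of_lt (by omega)] at hfix
      omega
  have hzero : ∀ a, a < k → (k - a) % k = a → f a = 0 := by
    intro a ha hfix
    rcases hcases a ha hfix with rfl | h2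
    · by_cases h1 : k = 1
      · subst h1
        have hd : dedekindSum 0 1 = 0 := by unfold dedekindSum; simp
        simp only [hf]
        rw [if_pos (by norm_num)]
        rw [show Real.pi * (dedekindSum 0 1 - 2 * ((0:ℕ):ℝ) * n / ((1:ℕ):ℝ))
            = ((0 : ℤ) : ℝ) * Real.pi by rw [hd]; push_cast; ring]
        exact Real.sin_int_mul_pi 0
      · have hg : Nat.gcd 0 k ≠ 1 := by simpa using h1
        simp only [hf]
        rw [if_neg hg]
    · by_cases ha1 : a = 1
      · subst ha1
        have hk2 : k = 2 := by omega
        subst hk2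
        simp only [hf]
        rw [if_pos (by norm_num)]
        rw [show Real.pi * (dedekindSum 1 2 - 2 * ((1:ℕ):ℝ) * n / ((2:ℕ):ℝ))
            = ((-n : ℤ) : ℝ) * Real.pi by rw [dedekindSum_one_two]; push_cast; ring]
        exact Real.sin_int_mul_pi _
      · have hg : Nat.gcd a k ≠ 1 := by
          have : Nat.gcd a k = a := by
            rw [h2, mul_comm]; exact Nat.gcd_eq_left (dvd_mul_right a 2)
          rw [this]; exact ha1
        simp only [hf]
        rw [if_neg hg]
  refine Finset.sum_involution (fun a _ => (k - a) % k) ?_ ?_ ?_ ?_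
  · -- pairs cancel
    intro a ha'
    have ha : a < k := Finset.mem_range.mp ha'
    show f a + f ((k - a) % k) = 0
    by_cases hfix : (k - a) % k = a
    · rw [hfix, hzero a ha hfix]; ring
    · by_cases hc : Nat.gcd a k = 1
      · have ha0 : a ≠ 0 := by
          intro h0; subst h0; simp [Nat.mod_self] at hfix
        have halt : (k - a) % k = k - a := Nat.mod_eq_of_lt (by omega)
        have hgb : Nat.gcd (k - a) k = 1 :=
          (Nat.coprime_self_sub_left (le_of_lt ha)).mpr hc
        rw [halt]
        simp only [hf, if_pos hc, if_pos hgb]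
        rw [dedekindSum_sub k a hk (le_of_lt ha) hc]
        have hcast : ((k - a : ℕ) : ℝ) = (k : ℝ) - a := by
          rw [Nat.cast_sub (le_of_lt ha)]
        have harg : Real.pi * (-dedekindSum a k - 2 * ((k - a : ℕ) : ℝ) * n / k)
            = -(Real.pi * (dedekindSum a k - 2 * a * n / k)) - n * (2 * Real.pi) := by
          rw [hcast]; field_simp; ring
        rw [harg, Real.sin_periodic.sub_int_mul_eq n, Real.sin_neg]
        ring
      · have hgb : Nat.gcd ((k - a) % k) k ≠ 1 := by
          rcases Nat.eq_zero_or_pos a with rfl | hpos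
          · exact absurd (by simp [Nat.mod_self]) hfix
          · rw [Nat.mod_eq_of_lt (by omega)]
            intro hco
            exact hc ((Nat.coprime_self_sub_left (le_of_lt ha)).mp hco)
        simp only [hf, if_neg hc, if_neg hgb]
        ring
  · -- f a ≠ 0 → g a ≠ a
    intro a ha hne hfix
    exact hne (hzero a (Finset.mem_range.mp ha) hfix)
  · intro a _; exact Finset.mem_range.mpr (Nat.mod_lt _ hk)
  · intro a ha'
    have ha : a < k := Finset.mem_range.mp ha'
    show (k - (k - a) % k) % k = a
    rcases Nat.eq_zero_or_pos a with rfl | hpos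
    · simp [Nat.mod_self]
    · rw [Nat.mod_eq_of_lt (show k - a < k by omega),
        show k - (k - a) = a from by omega, Nat.mod_eq_of_lt ha]
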